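/- arXiv:1311.7045 — 2 statements merged into one kernel-verified Lean document; each statement's English description precedes it below -/
import Mathlib

section
/- Let N ≥ 2 and let x ∈ ℂ^N satisfy x[n] ≠ 0 for all n = 2,…,N−1. If y ∈ ℂ^N is such that the Hermitian matrix X = x y* + y x* satisfies trace(φ_{m,n} φ_{m,n}* · X) = 0 for all m = 1,…,4 and n = 1,…,N−1, then X = 0. (Theorem 6, part 1: the restriction of A_Φ to the tangent space T_x = {x y* + y x* : y ∈ ℂ^N} is injective for every x ∈ S_Φ.) -/
open Complex Matrix MeasureTheory

noncomputable section

/-- α = √((1 − 1/√3)/2) -/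
def alph : ℂ := (Real.sqrt ((1 - 1/Real.sqrt 3)/2) : ℝ)

/-- β = e^{i5π/4}·√((1 + 1/√3)/2) -/
def beta : ℂ := Complex.exp (Complex.I * (5 * (Real.pi : ℂ) / 4)) *
  (Real.sqrt ((1 + 1/Real.sqrt 3)/2) : ℝ)

/-- the four frame vectors a₁ = (α,β), a₂ = (β,α), a₃ = (α,−β), a₄ = (−β,α) in ℂ² -/
def coef : Fin 4 → Fin 2 → ℂ := ![![alph, beta], ![beta, alph], ![alph, -beta], ![-beta, alph]]

/-- inner product ⟨x,y⟩ = Σ x[n]·conj(y[n]) -/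
def inn {N : ℕ} (x y : Fin N → ℂ) : ℂ := ∑ i, x i * (starRingEnd ℂ) (y i)

/-- Euclidean norm ‖x‖ = √⟨x,x⟩ -/
def nrm {N : ℕ} (x : Fin N → ℂ) : ℝ := Real.sqrt (inn x x).re

/-- outer product x y* -/
def outer {N : ℕ} (x y : Fin N → ℂ) : Matrix (Fin N) (Fin N) ℂ :=
  fun i j => x i * (starRingEnd ℂ) (y j)

/-- measurement vectors φ_{m,n} (0-based n: nonzero entries at positions n and n+1) -/
def phiv (N : ℕ) (m : Fin 4) (n : ℕ) : Fin N → ℂ :=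
  fun i => if (i : ℕ) = n then coef m 0 else if (i : ℕ) = n + 1 then coef m 1 else 0

/-- measurement vectors ψ_{m,n} (0-based n: nonzero entries at positions 0 and n+1) -/
def psiv (N : ℕ) (m : Fin 4) (n : ℕ) : Fin N → ℂ :=
  fun i => if (i : ℕ) = 0 then coef m 0 else if (i : ℕ) = n + 1 then coef m 1 else 0

/-- Hilbert–Schmidt inner product ⟨X,Y⟩ = trace(Y*X) -/
def hs {N : ℕ} (X Y : Matrix (Fin N) (Fin N) ℂ) : ℂ := Matrix.trace (Yᴴ * X)

/-- Frobenius (Hilbert–Schmidt) norm -/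
def frob {N : ℕ} (X : Matrix (Fin N) (Fin N) ℂ) : ℝ := Real.sqrt (Matrix.trace (Xᴴ * X)).re

/-- spectral norm (largest singular value) -/
def specNorm {N : ℕ} (A : Matrix (Fin N) (Fin N) ℂ) : ℝ :=
  sSup {r : ℝ | ∃ v : Fin N → ℂ, nrm v ≤ 1 ∧ r = nrm (A.mulVec v)}

/- ### Auxiliary lemmas -/

lemma sqrt3_gt_one : (1:ℝ) < Real.sqrt 3 := by
  have := Real.sqrt_lt_sqrt (by norm_num) (show (1:ℝ) < 3 by norm_num)
  simpa using this

lemma sqrt3_pos : (0:ℝ) < Real.sqrt 3 := by linarith [sqrt3_gt_one]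

lemma beta_eq : beta = (↑(-(Real.sqrt 2/2) * Real.sqrt ((1 + 1/Real.sqrt 3)/2)) : ℂ) * (1 + Complex.I) := by
  have h1 : Complex.I * (5 * (Real.pi : ℂ) / 4) = ((5 * Real.pi / 4 : ℝ) : ℂ) * Complex.I := by
    push_cast; ring
  have h2 : Real.cos (5 * Real.pi / 4) = -(Real.sqrt 2 / 2) := by
    have : 5 * Real.pi / 4 = Real.pi / 4 + Real.pi := by ring
    rw [this, Real.cos_add_pi, Real.cos_pi_div_four]
  have h3 : Real.sin (5 * Real.pi / 4) = -(Real.sqrt 2 / 2) := by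
    have : 5 * Real.pi / 4 = Real.pi / 4 + Real.pi := by ring
    rw [this, Real.sin_add_pi, Real.sin_pi_div_four]
  rw [beta, h1, Complex.exp_mul_I, ← Complex.ofReal_cos, ← Complex.ofReal_sin, h2, h3]
  push_cast
  ring

def cβ : ℝ := -(Real.sqrt 2/2) * Real.sqrt ((1 + 1/Real.sqrt 3)/2)
def aα : ℝ := Real.sqrt ((1 - 1/Real.sqrt 3)/2)

lemma alph_eq : alph = (aα : ℂ) := rfl
lemma beta_eq' : beta = (cβ : ℂ) * (1 + Complex.I) := beta_eq

lemma aα_pos : 0 < aα := by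
  apply Real.sqrt_pos.mpr
  have h := sqrt3_gt_one
  have : 1 / Real.sqrt 3 < 1 := by rw [div_lt_one sqrt3_pos]; exact h
  linarith

lemma cβ_neg : cβ < 0 := by
  have h2 : (0:ℝ) < Real.sqrt 2 := Real.sqrt_pos.mpr (by norm_num)
  have hb : (0:ℝ) < Real.sqrt ((1 + 1/Real.sqrt 3)/2) := by
    apply Real.sqrt_pos.mpr
    have h0 := sqrt3_pos
    positivity
  unfold cβ; nlinarith

lemma aα_sq : aα^2 = (1 - 1/Real.sqrt 3)/2 := by
  apply Real.sq_sqrt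
  have h := sqrt3_gt_one
  have : 1 / Real.sqrt 3 < 1 := by rw [div_lt_one sqrt3_pos]; exact h
  linarith

lemma cβ_sq : 2 * cβ^2 = (1 + 1/Real.sqrt 3)/2 := by
  have h0 := sqrt3_pos
  have hb : Real.sqrt ((1 + 1/Real.sqrt 3)/2)^2 = (1 + 1/Real.sqrt 3)/2 := by
    apply Real.sq_sqrt; positivity
  have h2 : Real.sqrt 2 ^ 2 = 2 := Real.sq_sqrt (by norm_num)
  unfold cβ; nlinarith

lemma block_zero (X00 X01 X10 X11 : ℂ)
    (h : ∀ m : Fin 4,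
      coef m 0 * (starRingEnd ℂ) (coef m 0) * X00 + coef m 0 * (starRingEnd ℂ) (coef m 1) * X10 +
      coef m 1 * (starRingEnd ℂ) (coef m 0) * X01 + coef m 1 * (starRingEnd ℂ) (coef m 1) * X11 = 0) :
    X00 = 0 ∧ X01 = 0 ∧ X10 = 0 ∧ X11 = 0 := by
  have c00 : coef 0 0 = alph := rfl
  have c01 : coef 0 1 = beta := rfl
  have c10 : coef 1 0 = beta := rfl
  have c11 : coef 1 1 = alph := rfl
  have c20 : coef 2 0 = alph := rfl
  have c21 : coef 2 1 = -beta := rfl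
  have c30 : coef 3 0 = -beta := rfl
  have c31 : coef 3 1 = alph := rfl
  have h0 := h 0
  have h1 := h 1
  have h2 := h 2
  have h3 := h 3
  rw [c00, c01] at h0
  rw [c10, c11] at h1
  rw [c20, c21] at h2
  rw [c30, c31] at h3
  rw [alph_eq, beta_eq'] at h0 h1 h2 h3
  simp only [_root_.map_mul, _root_.map_neg, _root_.map_add, _root_.map_one, Complex.conj_ofReal, Complex.conj_I] at h0 h1 h2 h3
  set a := (aα : ℂ) with ha
  set c := (cβ : ℂ) with hc
  have ha0 : a ≠ 0 := Complex.ofReal_ne_zero.mpr (ne_of_gt aα_pos)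
  have hc0 : c ≠ 0 := Complex.ofReal_ne_zero.mpr (ne_of_lt cβ_neg)
  have hA : a^2 = (((1 - 1/Real.sqrt 3)/2 : ℝ) : ℂ) := by
    rw [ha, ← Complex.ofReal_pow, aα_sq]
  have hB : 2*c^2 = (((1 + 1/Real.sqrt 3)/2 : ℝ) : ℂ) := by
    rw [hc, ← Complex.ofReal_pow, ← Complex.ofReal_ofNat, ← Complex.ofReal_mul, cβ_sq]
  have e1 : a^2 * X00 + (2*c^2) * X11 = 0 := by
    linear_combination (h0 + h2)/2 + c^2*X11*Complex.I_sq
  have e2 : (2*c^2) * X00 + a^2 * X11 = 0 := by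
    linear_combination (h1 + h3)/2 + c^2*X00*Complex.I_sq
  have d1 : (a^2 - 2*c^2) * (X00 - X11) = 0 := by linear_combination e1 - e2
  have hne : a^2 - 2*c^2 ≠ 0 := by
    rw [hA, hB, ← Complex.ofReal_sub]
    rw [Complex.ofReal_ne_zero]
    have : (1 - 1/Real.sqrt 3)/2 - (1 + 1/Real.sqrt 3)/2 = -(1/Real.sqrt 3) := by ring
    rw [this, neg_ne_zero]
    have := sqrt3_pos
    positivity
  have hsub : X00 - X11 = 0 := (mul_eq_zero.mp d1).resolve_left hne
  have hadd : X00 + X11 = 0 := by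
    have d2 : (a^2 + 2*c^2) * (X00 + X11) = 0 := by linear_combination e1 + e2
    have hone : a^2 + 2*c^2 = 1 := by
      rw [hA, hB, ← Complex.ofReal_add, ← Complex.ofReal_one]
      norm_num
      ring
    rwa [hone, one_mul] at d2
  have hX00 : X00 = 0 := by linear_combination (hsub + hadd)/2
  have hX11 : X11 = 0 := by linear_combination (hadd - hsub)/2
  have f1 : (a*c) * ((1-Complex.I)*X10 + (1+Complex.I)*X01) = 0 := by
    linear_combination (h0 - h2)/2
  have f2 : (a*c) * ((1+Complex.I)*X10 + (1-Complex.I)*X01) = 0 := by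
    linear_combination (h1 - h3)/2
  have hac : a*c ≠ 0 := mul_ne_zero ha0 hc0
  have g1 := (mul_eq_zero.mp f1).resolve_left hac
  have g2 := (mul_eq_zero.mp f2).resolve_left hac
  have s1 : X10 + X01 = 0 := by linear_combination (g1 + g2)/2
  have s2 : X01 - X10 = 0 := by
    linear_combination (-(Complex.I)/2)*(g1 - g2) + (X01 - X10)*Complex.I_sq
  have hX01 : X01 = 0 := by linear_combination (s1 + s2)/2
  have hX10 : X10 = 0 := by linear_combination (s1 - s2)/2
  exact ⟨hX00, hX01, hX10, hX11⟩

lemma sum_two {N : ℕ} (i0 i1 : Fin N) (hne : i0 ≠ i1) (f : Fin N → ℂ)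
    (hf : ∀ i, i ≠ i0 → i ≠ i1 → f i = 0) : ∑ i, f i = f i0 + f i1 := by
  rw [← Finset.sum_pair hne]
  symm
  apply Finset.sum_subset (Finset.subset_univ _)
  intro x _ hx
  simp only [Finset.mem_insert, Finset.mem_singleton] at hx
  push_neg at hx
  exact hf x hx.1 hx.2

lemma trace_outer_phiv {N : ℕ} (m : Fin 4) (n : ℕ) (i0 i1 : Fin N)
    (h0 : (i0 : ℕ) = n) (h1 : (i1 : ℕ) = n + 1) (X : Matrix (Fin N) (Fin N) ℂ) :
    Matrix.trace (outer (phiv N m n) (phiv N m n) * X) =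
      coef m 0 * (starRingEnd ℂ) (coef m 0) * X i0 i0 +
      coef m 0 * (starRingEnd ℂ) (coef m 1) * X i1 i0 +
      coef m 1 * (starRingEnd ℂ) (coef m 0) * X i0 i1 +
      coef m 1 * (starRingEnd ℂ) (coef m 1) * X i1 i1 := by
  have hne : i0 ≠ i1 := by
    intro h; rw [h, h1] at h0; omega
  set u := phiv N m n with hu
  have hsupp : ∀ i : Fin N, i ≠ i0 → i ≠ i1 → u i = 0 := by
    intro i hi0 hi1
    rw [hu]
    unfold phiv
    rw [if_neg, if_neg]
    · intro h; exact hi1 (Fin.ext (h.trans h1.symm))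
    · intro h; exact hi0 (Fin.ext (h.trans h0.symm))
  have u0 : u i0 = coef m 0 := by rw [hu]; unfold phiv; rw [if_pos h0]
  have u1 : u i1 = coef m 1 := by
    rw [hu]; unfold phiv; rw [if_neg (by omega), if_pos h1]
  have step1 : Matrix.trace (outer u u * X) = ∑ i, ∑ j, u i * (starRingEnd ℂ) (u j) * X j i := by
    simp only [Matrix.trace, Matrix.diag, Matrix.mul_apply, outer]
  rw [step1]
  rw [sum_two i0 i1 hne _ (fun i hi0 hi1 => by simp [hsupp i hi0 hi1])]
  rw [sum_two i0 i1 hne _ (fun j hj0 hj1 => by simp [hsupp j hj0 hj1]),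
      sum_two i0 i1 hne _ (fun j hj0 hj1 => by simp [hsupp j hj0 hj1])]
  rw [u0, u1]
  ring

/-- Theorem 6 (part 1): for x ∈ S_Φ the restriction of A_Φ to the tangent space
T_x = {xy* + yx* : y ∈ ℂ^N} is injective. -/
theorem tangent_injective_Phi (N : ℕ) (hN : 2 ≤ N) (x : Fin N → ℂ)
    (hx : ∀ i : Fin N, 0 < (i : ℕ) → (i : ℕ) < N - 1 → x i ≠ 0) (y : Fin N → ℂ)
    (hker : ∀ (m : Fin 4) (n : ℕ), n + 1 < N →
      Matrix.trace (outer (phiv N m n) (phiv N m n) * (outer x y + outer y x)) = 0) :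
    outer x y + outer y x = 0 := by
  have hent : ∀ i j : Fin N, (outer x y + outer y x) i j
      = x i * (starRingEnd ℂ) (y j) + y i * (starRingEnd ℂ) (x j) := by
    intro i j; simp [outer, Matrix.add_apply]
  -- entrywise block equations
  have hblk : ∀ (n : ℕ) (hn : n + 1 < N) (ha : n < N) (hb : n + 1 < N),
      (x ⟨n,ha⟩ * (starRingEnd ℂ) (y ⟨n,ha⟩) + y ⟨n,ha⟩ * (starRingEnd ℂ) (x ⟨n,ha⟩) = 0) ∧
      (x ⟨n,ha⟩ * (starRingEnd ℂ) (y ⟨n+1,hb⟩) + y ⟨n,ha⟩ * (starRingEnd ℂ) (x ⟨n+1,hb⟩) = 0) ∧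
      (x ⟨n+1,hb⟩ * (starRingEnd ℂ) (y ⟨n,ha⟩) + y ⟨n+1,hb⟩ * (starRingEnd ℂ) (x ⟨n,ha⟩) = 0) ∧
      (x ⟨n+1,hb⟩ * (starRingEnd ℂ) (y ⟨n+1,hb⟩) + y ⟨n+1,hb⟩ * (starRingEnd ℂ) (x ⟨n+1,hb⟩) = 0) := by
    intro n hn ha hb
    set M := outer x y + outer y x with hM
    have hb0 : ∀ m : Fin 4,
        coef m 0 * (starRingEnd ℂ) (coef m 0) * M ⟨n,ha⟩ ⟨n,ha⟩ +
        coef m 0 * (starRingEnd ℂ) (coef m 1) * M ⟨n+1,hb⟩ ⟨n,ha⟩ +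
        coef m 1 * (starRingEnd ℂ) (coef m 0) * M ⟨n,ha⟩ ⟨n+1,hb⟩ +
        coef m 1 * (starRingEnd ℂ) (coef m 1) * M ⟨n+1,hb⟩ ⟨n+1,hb⟩ = 0 := by
      intro m
      rw [← trace_outer_phiv m n ⟨n,ha⟩ ⟨n+1,hb⟩ rfl rfl M]
      exact hker m n hn
    obtain ⟨q1, q2, q3, q4⟩ := block_zero _ _ _ _ hb0
    rw [hent] at q1 q2 q3 q4
    exact ⟨q1, q2, q3, q4⟩
  rcases Nat.lt_or_ge N 3 with h2 | h3
  · -- N = 2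
    have hN2 : N = 2 := by omega
    subst hN2
    obtain ⟨q1, q2, q3, q4⟩ := hblk 0 (by omega) (by omega) (by omega)
    ext i j
    fin_cases i <;> fin_cases j <;>
      simp only [Matrix.add_apply, outer, Matrix.zero_apply]
    · exact q1
    · exact q2
    · exact q3
    · exact q4
  · -- N ≥ 3
    have h1N : 1 < N := by omega
    have h0N : 0 < N := by omega
    have hx1 : x ⟨1, h1N⟩ ≠ 0 := hx ⟨1, h1N⟩ (by norm_num) (by simp; omega)
    set z := x ⟨1, h1N⟩ * (starRingEnd ℂ) (y ⟨1, h1N⟩) with hzdef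
    have hdiag1 : z + (starRingEnd ℂ) z = 0 := by
      have := (hblk 1 (by omega) h1N (by omega)).1
      rw [hzdef]
      simp only [_root_.map_mul, Complex.conj_conj]
      linear_combination this
    have hre : z.re = 0 := by
      have := congrArg Complex.re hdiag1
      simp only [Complex.add_re, Complex.conj_re, Complex.zero_re] at this
      linarith
    have hns : (0:ℝ) < Complex.normSq (x ⟨1, h1N⟩) := Complex.normSq_pos.mpr hx1
    set t : ℝ := z.im / Complex.normSq (x ⟨1, h1N⟩) with htdef
    -- the propagation property
    set P : ℕ → Prop := fun k => ∀ h : k < N,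
      (starRingEnd ℂ) (y ⟨k, h⟩) = Complex.I * (t:ℂ) * (starRingEnd ℂ) (x ⟨k, h⟩) with hP
    have base : P 1 := by
      intro h
      apply mul_left_cancel₀ hx1
      have hz' : z = Complex.I * ((z.im : ℝ) : ℂ) := by
        apply Complex.ext <;> simp [hre]
      have hxc : x ⟨1, h1N⟩ * (starRingEnd ℂ) (x ⟨1, h1N⟩)
          = ((Complex.normSq (x ⟨1, h1N⟩) : ℝ) : ℂ) := Complex.mul_conj _
      have ht : t * Complex.normSq (x ⟨1, h1N⟩) = z.im :=
        div_mul_cancel₀ _ (ne_of_gt hns)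
      calc x ⟨1, h1N⟩ * (starRingEnd ℂ) (y ⟨1, h⟩) = z := rfl
        _ = Complex.I * ((z.im : ℝ) : ℂ) := hz'
        _ = Complex.I * (((t * Complex.normSq (x ⟨1, h1N⟩) : ℝ)) : ℂ) := by rw [ht]
        _ = Complex.I * (t:ℂ) * ((Complex.normSq (x ⟨1, h1N⟩) : ℝ) : ℂ) := by
            push_cast; ring
        _ = x ⟨1, h1N⟩ * (Complex.I * (t:ℂ) * (starRingEnd ℂ) (x ⟨1, h1N⟩)) := by
            rw [← hxc]; ring
    have main : ∀ k, 1 ≤ k → P k := by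
      intro k hk
      induction k, hk using Nat.le_induction with
      | base => exact base
      | succ k hk ih =>
        intro h
        have hkN : k < N := by omega
        have hxk : x ⟨k, hkN⟩ ≠ 0 := hx ⟨k, hkN⟩ (by simpa using Nat.lt_of_lt_of_le Nat.zero_lt_one hk) (by simp; omega)
        have hcx : (starRingEnd ℂ) (x ⟨k, hkN⟩) ≠ 0 := by
          intro h0
          apply hxk
          have := congrArg (starRingEnd ℂ) h0
          simpa using this
        have hoff := (hblk k h hkN h).2.2.1
        have ihk := ih hkN
        have heq : (starRingEnd ℂ) (x ⟨k, hkN⟩) *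
            (Complex.I * (t:ℂ) * x ⟨k+1, h⟩ + y ⟨k+1, h⟩) = 0 := by
          linear_combination hoff - x ⟨k+1, h⟩ * ihk
        have hy' : Complex.I * (t:ℂ) * x ⟨k+1, h⟩ + y ⟨k+1, h⟩ = 0 :=
          (mul_eq_zero.mp heq).resolve_left hcx
        have := congrArg (starRingEnd ℂ) hy'
        simp only [_root_.map_add, _root_.map_mul, Complex.conj_I, Complex.conj_ofReal, _root_.map_zero] at this
        linear_combination this
    have P0 : P 0 := by
      intro h
      have base1 := main 1 le_rfl h1N
      have hy1 : y ⟨1, h1N⟩ = -(Complex.I * (t:ℂ) * x ⟨1, h1N⟩) := by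
        have := congrArg (starRingEnd ℂ) base1
        simp only [_root_.map_mul, Complex.conj_I, Complex.conj_ofReal, Complex.conj_conj] at this
        linear_combination this
      have hoff := (hblk 0 h1N h h1N).2.2.1
      have heq : x ⟨1, h1N⟩ *
          ((starRingEnd ℂ) (y ⟨0, h⟩) - Complex.I * (t:ℂ) * (starRingEnd ℂ) (x ⟨0, h⟩)) = 0 := by
        linear_combination hoff - (starRingEnd ℂ) (x ⟨0, h⟩) * hy1
      have := (mul_eq_zero.mp heq).resolve_left hx1
      linear_combination this
    have hall : ∀ i : Fin N, (starRingEnd ℂ) (y i)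
        = Complex.I * (t:ℂ) * (starRingEnd ℂ) (x i) := by
      intro i
      obtain ⟨v, hv⟩ := i
      rcases Nat.eq_zero_or_pos v with rfl | hpos
      · exact P0 hv
      · exact main v hpos hv
    have hyall : ∀ i : Fin N, y i = -(Complex.I * (t:ℂ) * x i) := by
      intro i
      have := congrArg (starRingEnd ℂ) (hall i)
      simp only [_root_.map_mul, Complex.conj_I, Complex.conj_ofReal, Complex.conj_conj] at this
      linear_combination this
    ext i j
    simp only [Matrix.add_apply, Matrix.zero_apply, outer]
    rw [hall j, hyall i]
    ring
end
end

section
/- Let N ≥ 2 and let x ∈ ℂ^N satisfy x[n] ≠ 0 for all n = 2,…,N−1. Then the system of 4N−4 linear equations trace(φ_{m,n} φ_{m,n}* · X) = |⟨x, φ_{m,n}⟩|² (m = 1,…,4; n = 1,…,N−1) has a unique solution in the cone of Hermitian positive semidefinite N×N matrices, namely X = x x*. (Corollary 1, part Φ: exact recovery of x, up to a unimodular constant, by the PhaseLift semidefinite program from the 4N−4 deterministic Φ-measurements.) -/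
open Complex Matrix MeasureTheory

noncomputable section

open scoped ComplexOrder

/- ### Auxiliary numeric lemmas -/

lemma sqrt3_gt1 : 1 < Real.sqrt 3 := by
  rw [show (1:ℝ) = Real.sqrt 1 by simp]
  exact Real.sqrt_lt_sqrt (by norm_num) (by norm_num)

lemma Apos : 0 < (1 - 1/Real.sqrt 3)/2 := by
  have h := sqrt3_gt1
  have : 1/Real.sqrt 3 < 1 := by
    rw [div_lt_one (by linarith)]; exact h
  linarith

lemma Bpos : 0 < (1 + 1/Real.sqrt 3)/2 := by
  have h := sqrt3_gt1
  have : 0 < 1/Real.sqrt 3 := by positivity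
  linarith

lemma conj_alph : (starRingEnd ℂ) alph = alph := Complex.conj_ofReal _

lemma alph_sq : alph^2 = (((1 - 1/Real.sqrt 3)/2 : ℝ) : ℂ) := by
  rw [alph, ← Complex.ofReal_pow, Real.sq_sqrt Apos.le]

lemma alph_ne : alph ≠ 0 := by
  rw [alph, Complex.ofReal_ne_zero]
  exact (Real.sqrt_pos.2 Apos).ne'

lemma expconj : (starRingEnd ℂ) (Complex.exp (Complex.I * (5 * (Real.pi : ℂ) / 4)))
    = Complex.exp (-(Complex.I * (5 * (Real.pi : ℂ) / 4))) := by
  rw [← Complex.exp_conj]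
  congr 1
  simp only [_root_.map_mul, map_div₀, Complex.conj_I, Complex.conj_ofReal, map_ofNat]
  ring

lemma beta_mul_conj : beta * (starRingEnd ℂ) beta = (((1 + 1/Real.sqrt 3)/2 : ℝ) : ℂ) := by
  rw [beta, _root_.map_mul, expconj, Complex.conj_ofReal]
  rw [show Complex.exp (Complex.I * (5 * (Real.pi : ℂ) / 4)) * (Real.sqrt ((1 + 1/Real.sqrt 3)/2) : ℝ) *
      (Complex.exp (-(Complex.I * (5 * (Real.pi : ℂ) / 4))) * (Real.sqrt ((1 + 1/Real.sqrt 3)/2) : ℝ))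
    = (Complex.exp (Complex.I * (5 * (Real.pi : ℂ) / 4)) * Complex.exp (-(Complex.I * (5 * (Real.pi : ℂ) / 4))))
      * ((Real.sqrt ((1 + 1/Real.sqrt 3)/2) : ℝ) * (Real.sqrt ((1 + 1/Real.sqrt 3)/2) : ℝ)) by ring]
  rw [← Complex.exp_add, add_neg_cancel, Complex.exp_zero, one_mul, ← Complex.ofReal_mul,
    Real.mul_self_sqrt Bpos.le]

lemma exp_sq : Complex.exp (Complex.I * (5 * (Real.pi : ℂ) / 4)) ^ 2 = Complex.I := by
  rw [← Complex.exp_nat_mul]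
  rw [show (2:ℕ) * (Complex.I * (5 * (Real.pi : ℂ) / 4)) = 2 * (Real.pi:ℂ) * Complex.I + (Real.pi:ℂ)/2 * Complex.I by push_cast; ring]
  rw [Complex.exp_add, Complex.exp_two_pi_mul_I, one_mul, Complex.exp_mul_I,
    Complex.cos_pi_div_two, Complex.sin_pi_div_two]
  ring

lemma beta_sq : beta^2 = Complex.I * (((1 + 1/Real.sqrt 3)/2 : ℝ) : ℂ) := by
  rw [beta, mul_pow, exp_sq, ← Complex.ofReal_pow, Real.sq_sqrt Bpos.le]

lemma conj_beta_sq : ((starRingEnd ℂ) beta)^2 = -(Complex.I * (((1 + 1/Real.sqrt 3)/2 : ℝ) : ℂ)) := by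
  rw [← map_pow, beta_sq, _root_.map_mul, Complex.conj_I, Complex.conj_ofReal]
  ring

lemma beta_ne : beta ≠ 0 := by
  intro h
  have := beta_mul_conj
  rw [h, zero_mul] at this
  have : ((1 + 1/Real.sqrt 3)/2 : ℝ) = 0 := by
    exact_mod_cast this.symm
  exact Bpos.ne' this

lemma cbsq_sub_bsq_ne : ((starRingEnd ℂ) beta)^2 - beta^2 ≠ 0 := by
  rw [conj_beta_sq, beta_sq]
  intro h
  have h2 : Complex.I * (((1 + 1/Real.sqrt 3)/2 : ℝ) : ℂ) = 0 := by
    have := h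
    ring_nf at this ⊢
    linear_combination (-1/2 : ℂ) * this
  rcases mul_eq_zero.1 h2 with h3 | h3
  · exact Complex.I_ne_zero h3
  · rw [Complex.ofReal_eq_zero] at h3; exact Bpos.ne' h3

lemma quartic_ne : alph^2 * alph^2 - (beta * (starRingEnd ℂ) beta) * (beta * (starRingEnd ℂ) beta) ≠ 0 := by
  rw [alph_sq, beta_mul_conj, ← Complex.ofReal_mul, ← Complex.ofReal_mul, ← Complex.ofReal_sub,
    Complex.ofReal_ne_zero]
  have h1 : (0:ℝ) < 1/Real.sqrt 3 := by positivity
  nlinarith [Apos, Bpos]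

/- ### The 2×2 block lemma -/

lemma block_zero_s17 (P Q Q' R : ℂ)
    (h : ∀ m : Fin 4,
      coef m 0 * (starRingEnd ℂ) (coef m 0) * P + coef m 0 * (starRingEnd ℂ) (coef m 1) * Q +
        coef m 1 * (starRingEnd ℂ) (coef m 0) * Q' + coef m 1 * (starRingEnd ℂ) (coef m 1) * R = 0) :
    P = 0 ∧ Q = 0 ∧ Q' = 0 ∧ R = 0 := by
  have e00 : coef 0 0 = alph := rfl
  have e01 : coef 0 1 = beta := rfl
  have e10 : coef 1 0 = beta := rfl
  have e11 : coef 1 1 = alph := rfl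
  have e20 : coef 2 0 = alph := rfl
  have e21 : coef 2 1 = -beta := rfl
  have e30 : coef 3 0 = -beta := rfl
  have e31 : coef 3 1 = alph := rfl
  have h0 := h 0; have h1 := h 1; have h2 := h 2; have h3 := h 3
  rw [e00, e01, conj_alph] at h0
  rw [e10, e11, conj_alph] at h1
  rw [e20, e21, conj_alph, map_neg] at h2
  rw [e30, e31, conj_alph, map_neg] at h3
  set cb := (starRingEnd ℂ) beta with hcb
  have cb_ne : cb ≠ 0 := by
    rw [hcb, starRingEnd_apply]; exact star_ne_zero.2 beta_ne
  have hQ : (2 * alph) * (cb^2 - beta^2) * Q = 0 := by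
    linear_combination cb * h0 - cb * h2 - beta * h1 + beta * h3
  have hQ' : (2 * alph) * (cb^2 - beta^2) * Q' = 0 := by
    linear_combination -beta * h0 + beta * h2 + cb * h1 - cb * h3
  have hP : 2 * (alph^2 * alph^2 - (beta * cb) * (beta * cb)) * P = 0 := by
    linear_combination alph^2 * h0 + alph^2 * h2 - (beta*cb) * h1 - (beta*cb) * h3
  have hR : 2 * (alph^2 * alph^2 - (beta * cb) * (beta * cb)) * R = 0 := by
    linear_combination -(beta*cb) * h0 - (beta*cb) * h2 + alph^2 * h1 + alph^2 * h3
  have c1 : (2 * alph) * (cb^2 - beta^2) ≠ 0 :=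
    mul_ne_zero (mul_ne_zero two_ne_zero alph_ne) cbsq_sub_bsq_ne
  have c2 : (2 : ℂ) * (alph^2 * alph^2 - (beta * cb) * (beta * cb)) ≠ 0 :=
    mul_ne_zero two_ne_zero quartic_ne
  exact ⟨by rcases mul_eq_zero.1 hP with h | h; exact absurd h c2; exact h,
    by rcases mul_eq_zero.1 hQ with h | h; exact absurd h c1; exact h,
    by rcases mul_eq_zero.1 hQ' with h | h; exact absurd h c1; exact h,
    by rcases mul_eq_zero.1 hR with h | h; exact absurd h c2; exact h⟩

/- ### Sum over a two-point support -/

lemma sum_two_s17 {N : ℕ} {a b : Fin N} (hab : a ≠ b) (F : Fin N → ℂ)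
    (hF : ∀ i, i ≠ a → i ≠ b → F i = 0) :
    ∑ i, F i = F a + F b := by
  rw [← Finset.sum_pair hab]
  refine (Finset.sum_subset (Finset.subset_univ _) ?_).symm
  intro i _ hi
  simp only [Finset.mem_insert, Finset.mem_singleton, not_or] at hi
  exact hF i hi.1 hi.2

/- ### Propagation of Cauchy–Schwarz equality in PSD matrices -/

lemma psd_key {N : ℕ} {X : Matrix (Fin N) (Fin N) ℂ} (hX : X.PosSemidef) {a b : Fin N}
    (hab : a ≠ b) (heq : X a a * X b b = X a b * X b a) (c : Fin N) :
    X c a * X b b = X c b * X b a := by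
  set v : Fin N → ℂ := fun i => if i = a then X b b else if i = b then -(X b a) else 0 with hv
  have herm : ∀ i j, (starRingEnd ℂ) (X i j) = X j i := by
    intro i j
    conv_rhs => rw [← hX.1]
    simp [Matrix.conjTranspose_apply]
  have hmv : ∀ i, X.mulVec v i = X b b * X i a - X b a * X i b := by
    intro i
    simp only [Matrix.mulVec, dotProduct]
    rw [sum_two_s17 hab (fun j => X i j * v j) (fun j hja hjb => by simp [hv, hja, hjb])]
    simp [hv, hab.symm, if_neg]
    ring
  have hva : v a = X b b := by simp [hv]
  have hvb : v b = -(X b a) := by simp [hv, hab.symm]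
  have hq : star v ⬝ᵥ X.mulVec v = 0 := by
    simp only [dotProduct]
    rw [sum_two_s17 hab (fun i => (star v) i * X.mulVec v i)
      (fun i hia hib => by simp [hv, Pi.star_apply, hia, hib])]
    simp only [Pi.star_apply, hva, hvb, hmv a, hmv b, star_neg, RCLike.star_def, herm]
    linear_combination X b b * heq
  have h0 : X.mulVec v = 0 := (hX.dotProduct_mulVec_zero_iff v).1 hq
  have := congrFun h0 c
  rw [hmv c, Pi.zero_apply] at this
  linear_combination this

/- ### trace identity for rank-one measurements against a rank-one matrix -/

lemma trace_outer_outer {N : ℕ} (φ y : Fin N → ℂ) :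
    Matrix.trace (outer φ φ * outer y y) = inn y φ * (starRingEnd ℂ) (inn y φ) := by
  have h1 : Matrix.trace (outer φ φ * outer y y)
      = ∑ i, ∑ j, ((starRingEnd ℂ) (y i) * φ i) * (y j * (starRingEnd ℂ) (φ j)) := by
    simp only [Matrix.trace, Matrix.diag, Matrix.mul_apply, outer]
    exact Finset.sum_congr rfl fun i _ => Finset.sum_congr rfl fun j _ => by ring
  rw [h1, ← Finset.sum_mul_sum]
  have h2 : ∑ i, (starRingEnd ℂ) (y i) * φ i = (starRingEnd ℂ) (inn y φ) := by
    rw [inn, map_sum]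
    exact Finset.sum_congr rfl fun i _ => by
      rw [_root_.map_mul, Complex.conj_conj]
  have h3 : ∑ j, y j * (starRingEnd ℂ) (φ j) = inn y φ := rfl
  rw [h2, h3]
  ring

/- ### Main theorem -/

/-- Corollary 1 (part Φ): for x ∈ S_Φ, X = xx* is the unique Hermitian PSD solution
of the 4N−4 linear equations trace(φ_{m,n} φ_{m,n}*·X) = |⟨x,φ_{m,n}⟩|². -/
theorem phaselift_unique_Phi (N : ℕ) (hN : 2 ≤ N) (x : Fin N → ℂ)
    (hx : ∀ i : Fin N, 0 < (i : ℕ) → (i : ℕ) < N - 1 → x i ≠ 0) :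
    ((outer x x).PosSemidef ∧
      ∀ (m : Fin 4) (n : ℕ), n + 1 < N →
        Matrix.trace (outer (phiv N m n) (phiv N m n) * outer x x)
          = ((‖inn x (phiv N m n)‖ ^ 2 : ℝ) : ℂ)) ∧
    (∀ X : Matrix (Fin N) (Fin N) ℂ, X.PosSemidef →
      (∀ (m : Fin 4) (n : ℕ), n + 1 < N →
        Matrix.trace (outer (phiv N m n) (phiv N m n) * X)
          = ((‖inn x (phiv N m n)‖ ^ 2 : ℝ) : ℂ)) →
      X = outer x x) := by
  constructor
  · constructor
    · -- xx* is PSD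
      rw [Matrix.posSemidef_iff_dotProduct_mulVec]; constructor
      · ext i j
        simp only [Matrix.conjTranspose_apply, outer, _root_.map_mul, Complex.conj_conj,
          RCLike.star_def]
        ring
      · intro v
        have hmv : ∀ i, (outer x x).mulVec v i
            = x i * (∑ j, (starRingEnd ℂ) (x j) * v j) := by
          intro i
          simp only [Matrix.mulVec, dotProduct, outer]
          rw [Finset.mul_sum]
          exact Finset.sum_congr rfl fun j _ => by ring
        have hstep : star v ⬝ᵥ (outer x x).mulVec v
            = (∑ i, star (v i) * x i) * (∑ j, (starRingEnd ℂ) (x j) * v j) := by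
          simp only [dotProduct, Pi.star_apply, hmv]
          rw [Finset.sum_mul]
          exact Finset.sum_congr rfl fun i _ => by ring
        have hconj : (∑ i, star (v i) * x i)
            = (starRingEnd ℂ) (∑ j, (starRingEnd ℂ) (x j) * v j) := by
          rw [map_sum]
          exact Finset.sum_congr rfl fun i _ => by
            rw [_root_.map_mul, Complex.conj_conj, RCLike.star_def]; ring
        rw [hstep, hconj, mul_comm, Complex.mul_conj]
        exact Complex.zero_le_real.2 (Complex.normSq_nonneg _)
    · -- the measurements of xx*
      intro m n hn
      rw [trace_outer_outer, Complex.mul_conj, ← Complex.sq_norm]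
  · -- uniqueness
    intro X hX hcons
    have herm : ∀ i j, (starRingEnd ℂ) (X i j) = X j i := by
      intro i j
      conv_rhs => rw [← hX.1]
      simp [Matrix.conjTranspose_apply]
    have adj : ∀ a b : Fin N, (b:ℕ) = (a:ℕ) + 1 →
        X a a = x a * (starRingEnd ℂ) (x a) ∧ X a b = x a * (starRingEnd ℂ) (x b) ∧
        X b a = x b * (starRingEnd ℂ) (x a) ∧ X b b = x b * (starRingEnd ℂ) (x b) := by
      intro a b hba
      have hab : a ≠ b := by
        intro h
        rw [h] at hba
        omega
      have hn : (a:ℕ) + 1 < N := hba ▸ b.isLt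
      have hφ0 : ∀ (m : Fin 4) (i : Fin N), i ≠ a → i ≠ b → phiv N m (a:ℕ) i = 0 := by
        intro m i hia hib
        simp only [phiv]
        rw [if_neg (fun h => hia (Fin.ext h)), if_neg (fun h => hib (Fin.ext (by rw [h, ← hba])))]
      have hφa : ∀ m, phiv N m (a:ℕ) a = coef m 0 := fun m => by simp [phiv]
      have hφb : ∀ m, phiv N m (a:ℕ) b = coef m 1 := fun m => by
        simp [phiv, hba]
      have ht : ∀ m, Matrix.trace (outer (phiv N m (a:ℕ)) (phiv N m (a:ℕ)) * X)
          = coef m 0 * (starRingEnd ℂ) (coef m 0) * X a a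
            + coef m 0 * (starRingEnd ℂ) (coef m 1) * X b a
            + coef m 1 * (starRingEnd ℂ) (coef m 0) * X a b
            + coef m 1 * (starRingEnd ℂ) (coef m 1) * X b b := by
        intro m
        set φ := phiv N m (a:ℕ) with hφ
        have h1 : Matrix.trace (outer φ φ * X) = ∑ i, ∑ j, φ i * (starRingEnd ℂ) (φ j) * X j i := by
          simp only [Matrix.trace, Matrix.diag, Matrix.mul_apply, outer]
        rw [h1, sum_two_s17 hab (fun i => ∑ j, φ i * (starRingEnd ℂ) (φ j) * X j i)
          (fun i hia hib => by simp [hφ, hφ0 m i hia hib])]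
        rw [sum_two_s17 hab (fun j => φ a * (starRingEnd ℂ) (φ j) * X j a)
            (fun j hja hjb => by simp [hφ, hφ0 m j hja hjb]),
          sum_two_s17 hab (fun j => φ b * (starRingEnd ℂ) (φ j) * X j b)
            (fun j hja hjb => by simp [hφ, hφ0 m j hja hjb])]
        rw [hφ, hφa, hφb]
        ring
      have hinn : ∀ m, inn x (phiv N m (a:ℕ))
          = x a * (starRingEnd ℂ) (coef m 0) + x b * (starRingEnd ℂ) (coef m 1) := by
        intro m
        simp only [inn]
        rw [sum_two_s17 hab (fun i => x i * (starRingEnd ℂ) (phiv N m (a:ℕ) i))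
          (fun i hia hib => by simp [hφ0 m i hia hib]), hφa, hφb]
      have hblock := block_zero_s17 (X a a - x a * (starRingEnd ℂ) (x a))
          (X b a - x b * (starRingEnd ℂ) (x a))
          (X a b - x a * (starRingEnd ℂ) (x b))
          (X b b - x b * (starRingEnd ℂ) (x b)) ?_
      · exact ⟨by linear_combination hblock.1, by linear_combination hblock.2.2.1,
          by linear_combination hblock.2.1, by linear_combination hblock.2.2.2⟩
      · intro m
        have hm := hcons m (a:ℕ) hn
        rw [ht m, hinn m] at hm
        rw [show ((‖x a * (starRingEnd ℂ) (coef m 0)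
              + x b * (starRingEnd ℂ) (coef m 1)‖ ^ 2 : ℝ) : ℂ)
            = (x a * (starRingEnd ℂ) (coef m 0) + x b * (starRingEnd ℂ) (coef m 1))
              * (starRingEnd ℂ) (x a * (starRingEnd ℂ) (coef m 0)
                + x b * (starRingEnd ℂ) (coef m 1)) from by
          rw [Complex.sq_norm, Complex.mul_conj]] at hm
        simp only [map_add, _root_.map_mul, Complex.conj_conj] at hm
        linear_combination hm
    have diag : ∀ i : Fin N, X i i = x i * (starRingEnd ℂ) (x i) := by
      intro i
      by_cases h : (i:ℕ) + 1 < N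
      · exact (adj i ⟨(i:ℕ)+1, h⟩ rfl).1
      · have hlt : (i:ℕ) - 1 < N := by omega
        have h1 : (i:ℕ) = ((⟨(i:ℕ)-1, hlt⟩ : Fin N) : ℕ) + 1 := by
          show (i:ℕ) = (i:ℕ) - 1 + 1
          have := i.isLt
          omega
        exact (adj ⟨(i:ℕ)-1, hlt⟩ i h1).2.2.2
    have key : ∀ d : ℕ, ∀ a c : Fin N, (c:ℕ) = (a:ℕ) + d →
        X c a = x c * (starRingEnd ℂ) (x a) := by
      intro d
      induction d using Nat.strong_induction_on with
      | _ d ih =>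
        match d, ih with
        | 0, _ =>
          intro a c h
          have : c = a := Fin.ext (by omega)
          rw [this]; exact diag a
        | 1, _ =>
          intro a c h
          exact (adj a c h).2.2.1
        | (e+2), ih =>
          intro a c h
          have hcN := c.isLt
          have hb : (a:ℕ) + 1 < N := by omega
          set b : Fin N := ⟨(a:ℕ)+1, hb⟩ with hbdef
          have hba : (b:ℕ) = (a:ℕ) + 1 := rfl
          obtain ⟨haa, hab2, hba2, hbb⟩ := adj a b hba
          have hxb : x b ≠ 0 := hx b (by rw [hba]; omega) (by rw [hba]; omega)
          have habne : a ≠ b := by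
            intro hh
            have := congrArg Fin.val hh
            rw [hba] at this
            omega
          have heq : X a a * X b b = X a b * X b a := by
            rw [haa, hbb, hab2, hba2]; ring
          have hkey := psd_key hX habne heq c
          have hcb : X c b = x c * (starRingEnd ℂ) (x b) :=
            ih (e+1) (by omega) b c (by rw [hba]; omega)
          rw [hcb, hba2, hbb] at hkey
          have hnz : x b * (starRingEnd ℂ) (x b) ≠ 0 :=
            mul_ne_zero hxb (by rw [starRingEnd_apply]; exact star_ne_zero.2 hxb)
          apply mul_right_cancel₀ hnz
          rw [hkey]; ring
    ext i j
    rcases le_or_gt (j:ℕ) (i:ℕ) with hle | hlt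
    · have := key ((i:ℕ) - (j:ℕ)) j i (by omega)
      simpa [outer] using this
    · have h1 := key ((j:ℕ) - (i:ℕ)) i j (by omega)
      rw [← herm j i, h1]
      simp only [outer, _root_.map_mul, Complex.conj_conj]
      ring
end
end
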